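/- Let P be a real symmetric stochastic matrix (indexed by a finite set), i.e. P is symmetric, has nonnegative entries, and each row sums to 1. Then for every integer n ≥ 1, the matrix g_n := ∑_{k=2^n-2}^{2^{n+1}-3} P^k is positive semidefinite. -/

import Mathlib

open Matrix Finset

lemma one_add_psd {ι : Type*} [Fintype ι] [DecidableEq ι]
    (P : Matrix ι ι ℝ) (hsymm : P.IsSymm)
    (hnonneg : ∀ i j, 0 ≤ P i j)
    (hrow : ∀ i, ∑ j, P i j = 1) : (1 + P).PosSemidef := by
  have hcol : ∀ j, ∑ i, P i j = 1 := by
    intro j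
    calc ∑ i, P i j = ∑ i, P j i := by
          exact Finset.sum_congr rfl fun i _ => hsymm.apply j i
      _ = 1 := hrow j
  rw [Matrix.posSemidef_iff_dotProduct_mulVec]
  constructor
  · have h : (1 + P).IsSymm := by
      rw [Matrix.IsSymm, Matrix.transpose_add, Matrix.transpose_one, hsymm]
    rw [Matrix.IsHermitian]
    ext i j
    simpa [Matrix.conjTranspose_apply] using congrFun (congrFun h i) j
  · intro x
    have key : 2 * (star x ⬝ᵥ (1 + P) *ᵥ x) = ∑ i, ∑ j, P i j * (x i + x j) ^ 2 := by
      have expand : ∑ i, ∑ j, P i j * (x i + x j) ^ 2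
          = (∑ i, ∑ j, P i j * x i ^ 2) + (∑ i, ∑ j, P i j * x j ^ 2)
            + 2 * ∑ i, ∑ j, P i j * (x i * x j) := by
        simp only [Finset.mul_sum, ← Finset.sum_add_distrib]
        refine Finset.sum_congr rfl fun i _ => Finset.sum_congr rfl fun j _ => ?_
        ring
      have h1 : (∑ i, ∑ j, P i j * x i ^ 2) = ∑ i, x i ^ 2 := by
        refine Finset.sum_congr rfl fun i _ => ?_
        rw [← Finset.sum_mul, hrow, one_mul]
      have h2 : (∑ i, ∑ j, P i j * x j ^ 2) = ∑ j, x j ^ 2 := by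
        rw [Finset.sum_comm]
        refine Finset.sum_congr rfl fun j _ => ?_
        rw [← Finset.sum_mul, hcol, one_mul]
      have h3 : star x ⬝ᵥ (1 + P) *ᵥ x
          = (∑ i, x i ^ 2) + ∑ i, ∑ j, P i j * (x i * x j) := by
        rw [star_trivial, Matrix.add_mulVec, dotProduct_add, Matrix.one_mulVec]
        congr 1
        · simp [dotProduct, sq]
        · simp only [dotProduct, Matrix.mulVec, Finset.mul_sum]
          exact Finset.sum_congr rfl fun i _ => Finset.sum_congr rfl fun j _ => by ring
      rw [expand, h1, h2, h3]; ring
    have hnn : 0 ≤ ∑ i, ∑ j, P i j * (x i + x j) ^ 2 := by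
      refine Finset.sum_nonneg fun i _ => Finset.sum_nonneg fun j _ => ?_
      exact mul_nonneg (hnonneg i j) (sq_nonneg _)
    nlinarith [key, hnn]

lemma sum_range_psd {ι : Type*} [Fintype ι] [DecidableEq ι]
    (P : Matrix ι ι ℝ) (hsymm : P.IsSymm)
    (hnonneg : ∀ i j, 0 ≤ P i j)
    (hrow : ∀ i, ∑ j, P i j = 1) (m L : ℕ) :
    (∑ k ∈ Finset.range (2 * L), P ^ (2 * m + k)).PosSemidef := by
  induction L with
  | zero => simpa using Matrix.PosSemidef.zero
  | succ L ih =>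
    have h : 2 * (L + 1) = 2 * L + 1 + 1 := by ring
    rw [h, Finset.sum_range_succ, Finset.sum_range_succ, add_assoc]
    refine ih.add ?_
    have h2 : P ^ (2 * m + 2 * L) + P ^ (2 * m + (2 * L + 1))
        = (P ^ (m + L))ᴴ * (1 + P) * P ^ (m + L) := by
      have hT : (P ^ (m + L))ᴴ = P ^ (m + L) := by
        rw [Matrix.conjTranspose_eq_transpose_of_trivial, (hsymm.pow (m + L)).eq]
      rw [hT, mul_add, mul_one, add_mul, ← pow_add, mul_assoc, ← pow_succ', ← pow_add]
      congr 1 <;> ring_nf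
    rw [h2]
    exact (one_add_psd P hsymm hnonneg hrow).conjTranspose_mul_mul_same _

theorem finite_range_decomposition_posSemidef
    {ι : Type*} [Fintype ι] [DecidableEq ι]
    (P : Matrix ι ι ℝ) (hsymm : P.IsSymm)
    (hnonneg : ∀ i j, 0 ≤ P i j)
    (hrow : ∀ i, ∑ j, P i j = 1)
    (n : ℕ) (hn : 1 ≤ n) :
    (∑ k ∈ Finset.Icc (2 ^ n - 2) (2 ^ (n + 1) - 3), P ^ k).PosSemidef := by
  have e0 : 2 ^ n = 2 * 2 ^ (n - 1) := by
    conv_lhs => rw [show n = (n - 1) + 1 by omega]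
    rw [pow_succ]; ring
  have e00 : 2 ^ (n + 1) = 2 * 2 ^ n := by rw [pow_succ]; ring
  have hge : 1 ≤ 2 ^ (n - 1) := Nat.one_le_two_pow
  rw [← Finset.Ico_add_one_right_eq_Icc, Finset.sum_Ico_eq_sum_range]
  have e1 : 2 ^ (n + 1) - 3 + 1 - (2 ^ n - 2) = 2 * 2 ^ (n - 1) := by omega
  have e2 : 2 ^ n - 2 = 2 * (2 ^ (n - 1) - 1) := by omega
  rw [e1, e2]
  exact sum_range_psd P hsymm hnonneg hrow _ _
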